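/- arXiv:2412.09904 — 3 statements merged into one kernel-verified Lean document; each statement's English description precedes it below -/
import Mathlib

section
/- Let t ≥ 1 and consider the values ρ(r) = K_{2t}^{4t-1}(r) for 0 ≤ r ≤ 4t-1. Then the minimum value is ρ(1) = -C(4t-1, 2t)/(4t-1), i.e., K_{2t}^{4t-1}(r) ≥ -C(4t-1,2t)/(4t-1) for all 0 ≤ r ≤ 4t-1 with equality at r=1. -/
open Polynomial Finset

/-- Binary Krawtchouk polynomial `K_ℓ^n(r) = ∑_{j=0}^ℓ (-1)^j C(r,j) C(n-r, ℓ-j)`. -/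
def binKraw (n ℓ r : ℕ) : ℤ :=
  ∑ j ∈ Finset.range (ℓ + 1), (-1 : ℤ) ^ j * (r.choose j) * ((n - r).choose (ℓ - j))

lemma choose_sub_mul_comm (N a b : ℕ) :
    N.choose a * (N - a).choose b = N.choose b * (N - b).choose a := by
  rcases le_or_gt (a + b) N with h | h
  · have ha : a ≤ a + b := Nat.le_add_right a b
    have hb : b ≤ a + b := Nat.le_add_left b a
    have h1 := Nat.choose_mul (n := N) ha
    have h2 := Nat.choose_mul (n := N) hb
    simp only [Nat.add_sub_cancel_left, Nat.add_sub_cancel] at h1 h2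
    rw [← h1, ← h2, Nat.choose_symm_add]
  · rcases le_or_gt a N with haN | haN
    · rcases le_or_gt b N with hbN | hbN
      · have e1 : (N - a).choose b = 0 := Nat.choose_eq_zero_of_lt (by omega)
        have e2 : (N - b).choose a = 0 := Nat.choose_eq_zero_of_lt (by omega)
        rw [e1, e2, mul_zero, mul_zero]
      · have e1 : N.choose b = 0 := Nat.choose_eq_zero_of_lt hbN
        have e2 : (N - a).choose b = 0 := Nat.choose_eq_zero_of_lt (by omega)
        rw [e1, e2, mul_zero, zero_mul]
    · have e1 : N.choose a = 0 := Nat.choose_eq_zero_of_lt haN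
      have e2 : (N - b).choose a = 0 := Nat.choose_eq_zero_of_lt (by omega)
      rw [e1, e2, mul_zero, zero_mul]

lemma key_term (n ℓ r j : ℕ) (hr : r ≤ n) (hl : ℓ ≤ n) (hjr : j ≤ r) (hjl : j ≤ ℓ) :
    n.choose r * (r.choose j * (n - r).choose (ℓ - j)) =
      n.choose ℓ * (ℓ.choose j * (n - ℓ).choose (r - j)) := by
  rw [← mul_assoc, Nat.choose_mul hjr, ← mul_assoc, Nat.choose_mul hjl,
    mul_assoc, mul_assoc]
  congr 1
  have h1 : n - r = (n - j) - (r - j) := by omega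
  have h2 : n - ℓ = (n - j) - (ℓ - j) := by omega
  rw [h1, h2, choose_sub_mul_comm]

lemma binKraw_restrict (n ℓ r : ℕ) :
    binKraw n ℓ r = ∑ j ∈ Finset.range (min r ℓ + 1),
      (-1 : ℤ) ^ j * (r.choose j) * ((n - r).choose (ℓ - j)) := by
  unfold binKraw
  rw [← Finset.sum_subset (Finset.range_subset_range.2 (by omega : min r ℓ + 1 ≤ ℓ + 1))]
  intro j hj hj'
  simp only [Finset.mem_range] at hj hj'
  have : r < j := by omega
  simp [Nat.choose_eq_zero_of_lt this]

lemma binKraw_dual (n ℓ r : ℕ) (hr : r ≤ n) (hl : ℓ ≤ n) :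
    (n.choose r : ℤ) * binKraw n ℓ r = (n.choose ℓ : ℤ) * binKraw n r ℓ := by
  rw [binKraw_restrict n ℓ r, binKraw_restrict n r ℓ, min_comm r ℓ, Finset.mul_sum,
    Finset.mul_sum]
  apply Finset.sum_congr rfl
  intro j hj
  simp only [Finset.mem_range] at hj
  have h := key_term n ℓ r j hr hl (by omega) (by omega)
  have h' := congrArg (Nat.cast : ℕ → ℤ) h
  push_cast at h'
  linear_combination ((-1 : ℤ) ^ j) * h'

lemma coeff_one_sub_X_pow (r k : ℕ) :
    ((1 - X : Polynomial ℤ) ^ r).coeff k = (-1) ^ k * r.choose k := by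
  have h : (1 - X : Polynomial ℤ) = (-X) + 1 := by ring
  rw [h, add_pow, Polynomial.finset_sum_coeff]
  have hterm : ∀ i ∈ Finset.range (r + 1),
      ((-X : Polynomial ℤ) ^ i * 1 ^ (r - i) * (r.choose i : Polynomial ℤ)).coeff k
        = if i = k then ((-1) ^ k * r.choose k : ℤ) else 0 := by
    intro i _
    rw [one_pow, mul_one, neg_pow, ← Polynomial.C_eq_natCast,
      show ((-1 : Polynomial ℤ) ^ i) = Polynomial.C ((-1 : ℤ) ^ i) by simp,
      Polynomial.coeff_mul_C, Polynomial.coeff_C_mul, Polynomial.coeff_X_pow]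
    split_ifs with h1 h2 h2
    · subst h2; ring
    · omega
    · omega
    · ring
  rw [Finset.sum_congr rfl hterm, Finset.sum_ite_eq' (Finset.range (r + 1)) k]
  split_ifs with h1
  · rfl
  · simp only [Finset.mem_range, not_lt] at h1
    rw [Nat.choose_eq_zero_of_lt (by omega)]
    ring

lemma coeff_one_sub_X_sq_pow (N k : ℕ) :
    ((1 - X ^ 2 : Polynomial ℤ) ^ N).coeff k =
      if k % 2 = 0 then ((-1 : ℤ) ^ (k / 2) * (N.choose (k / 2) : ℤ)) else 0 := by
  have h : (1 - X ^ 2 : Polynomial ℤ) = (-(X ^ 2)) + 1 := by ring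
  rw [h, add_pow, Polynomial.finset_sum_coeff]
  have hterm : ∀ i ∈ Finset.range (N + 1),
      ((-(X ^ 2) : Polynomial ℤ) ^ i * 1 ^ (N - i) * (N.choose i : Polynomial ℤ)).coeff k
        = if 2 * i = k then ((-1) ^ i * N.choose i : ℤ) else 0 := by
    intro i _
    rw [one_pow, mul_one, neg_pow, ← pow_mul, ← Polynomial.C_eq_natCast,
      show ((-1 : Polynomial ℤ) ^ i) = Polynomial.C ((-1 : ℤ) ^ i) by simp,
      Polynomial.coeff_mul_C, Polynomial.coeff_C_mul, Polynomial.coeff_X_pow]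
    split_ifs with h1 h2 h2
    · ring
    · omega
    · omega
    · ring
  rw [Finset.sum_congr rfl hterm]
  by_cases hk : k % 2 = 0
  · rw [if_pos hk]
    by_cases hkN : k / 2 ≤ N
    · rw [Finset.sum_eq_single (k / 2)]
      · rw [if_pos (by omega)]
      · intro i _ hne
        rw [if_neg (by omega)]
      · intro habs
        exact absurd (Finset.mem_range.2 (by omega)) habs
    · rw [Finset.sum_eq_zero, Nat.choose_eq_zero_of_lt (show N < k / 2 by omega)]
      · ring
      · intro i hi
        simp only [Finset.mem_range] at hi
        rw [if_neg (by omega)]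
  · rw [if_neg hk, Finset.sum_eq_zero]
    intro i _
    rw [if_neg (by omega)]

lemma binKraw_eq_coeff (n ℓ r : ℕ) :
    binKraw n ℓ r = ((1 - X : Polynomial ℤ) ^ r * (1 + X) ^ (n - r)).coeff ℓ := by
  rw [Polynomial.coeff_mul, Finset.Nat.sum_antidiagonal_eq_sum_range_succ_mk]
  unfold binKraw
  apply Finset.sum_congr rfl
  intro j _
  rw [coeff_one_sub_X_pow, Polynomial.coeff_one_add_X_pow]

lemma binKraw_eval (t r : ℕ) (ht : 1 ≤ t) :
    binKraw (4 * t - 1) r (2 * t) =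
      (-1) ^ ((r + 1) / 2) * ((2 * t - 1).choose (r / 2) : ℤ) := by
  rw [binKraw_eq_coeff]
  have h1 : 4 * t - 1 - 2 * t = 2 * t - 1 := by omega
  rw [h1]
  obtain ⟨s, hs⟩ : ∃ s, 2 * t - 1 = s := ⟨2 * t - 1, rfl⟩
  have hs2 : 2 * t = s + 1 := by omega
  rw [hs, hs2]
  have h2 : (1 - X : Polynomial ℤ) ^ (s + 1) * (1 + X) ^ s
      = (1 - X ^ 2) ^ s - X * (1 - X ^ 2) ^ s := by
    rw [pow_succ]
    have : (1 - X ^ 2 : Polynomial ℤ) ^ s = (1 - X) ^ s * (1 + X) ^ s := by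
      rw [← mul_pow]; congr 1; ring
    rw [this]; ring
  rw [h2, Polynomial.coeff_sub]
  rcases r with _ | q
  · rw [Polynomial.mul_coeff_zero, Polynomial.coeff_X_zero, zero_mul, sub_zero,
      coeff_one_sub_X_sq_pow]
    norm_num
  · rw [Polynomial.coeff_X_mul, coeff_one_sub_X_sq_pow, coeff_one_sub_X_sq_pow]
    rcases Nat.even_or_odd q with ⟨m, hm⟩ | ⟨m, hm⟩
    · -- q = 2m, r = 2m+1 odd
      subst hm
      rw [if_neg (by omega), if_pos (by omega), zero_sub]
      have e1 : (m + m) / 2 = m := by omega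
      have e2 : (m + m + 1) / 2 = m := by omega
      have e3 : (m + m + 1 + 1) / 2 = m + 1 := by omega
      rw [e1, e2, e3, pow_succ]
      ring
    · -- q = 2m+1, r = 2m+2 even
      subst hm
      rw [if_pos (by omega), if_neg (by omega), sub_zero]
      have e1 : (2 * m + 1 + 1) / 2 = m + 1 := by omega
      have e2 : (2 * m + 1 + 1 + 1) / 2 = m + 1 := by omega
      rw [e1, e2]

lemma choose_ineq_core (T : ℕ) :
    ∀ r, 1 ≤ r → r ≤ 2 * T + 1 →
      (4 * T + 3) * Nat.choose (2 * T + 1) (r / 2) ≤ Nat.choose (4 * T + 3) r := by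
  intro r
  induction r using Nat.strong_induction_on with
  | _ r IH =>
    intro h1 h2
    match r, h1, h2 with
    | 1, _, _ => simp [Nat.choose_one_right]
    | 2, _, _ =>
      rw [Nat.choose_two_right]
      have e : 4 * T + 3 - 1 = 2 * (2 * T + 1) := by omega
      rw [e, show (4 * T + 3) * (2 * (2 * T + 1)) = 2 * ((4 * T + 3) * (2 * T + 1)) by ring,
        Nat.mul_div_cancel_left _ (by norm_num : 0 < 2)]
      simp [Nat.choose_one_right]
    | (q + 3), _, h2 =>
      have ih := IH (q + 1) (by omega) (by omega) (by omega)
      set n := 4 * T + 3 with hn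
      set m := (q + 1) / 2 with hm
      have hm3 : (q + 3) / 2 = m + 1 := by omega
      rw [hm3]
      have I1 : Nat.choose n (q + 2) * (q + 2) = Nat.choose n (q + 1) * (n - (q + 1)) :=
        Nat.choose_succ_right_eq n (q + 1)
      have I2 : Nat.choose n (q + 3) * (q + 3) = Nat.choose n (q + 2) * (n - (q + 2)) :=
        Nat.choose_succ_right_eq n (q + 2)
      have I3 : Nat.choose (2 * T + 1) (m + 1) * (m + 1)
          = Nat.choose (2 * T + 1) m * (2 * T + 1 - m) :=
        Nat.choose_succ_right_eq (2 * T + 1) m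
      have hpos : 0 < (q + 2) * (q + 3) * (m + 1) := by positivity
      apply Nat.le_of_mul_le_mul_right _ hpos
      have R : Nat.choose n (q + 3) * ((q + 2) * (q + 3) * (m + 1))
          = Nat.choose n (q + 1) * (n - (q + 1)) * (n - (q + 2)) * (m + 1) := by
        calc Nat.choose n (q + 3) * ((q + 2) * (q + 3) * (m + 1))
            = (Nat.choose n (q + 3) * (q + 3)) * (q + 2) * (m + 1) := by ring
          _ = (Nat.choose n (q + 2) * (n - (q + 2))) * (q + 2) * (m + 1) := by rw [I2]
          _ = (Nat.choose n (q + 2) * (q + 2)) * (n - (q + 2)) * (m + 1) := by ring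
          _ = Nat.choose n (q + 1) * (n - (q + 1)) * (n - (q + 2)) * (m + 1) := by rw [I1]
      have L : n * Nat.choose (2 * T + 1) (m + 1) * ((q + 2) * (q + 3) * (m + 1))
          = n * Nat.choose (2 * T + 1) m * ((2 * T + 1 - m) * ((q + 2) * (q + 3))) := by
        calc n * Nat.choose (2 * T + 1) (m + 1) * ((q + 2) * (q + 3) * (m + 1))
            = n * (Nat.choose (2 * T + 1) (m + 1) * (m + 1)) * ((q + 2) * (q + 3)) := by ring
          _ = n * (Nat.choose (2 * T + 1) m * (2 * T + 1 - m)) * ((q + 2) * (q + 3)) := by rw [I3]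
          _ = n * Nat.choose (2 * T + 1) m * ((2 * T + 1 - m) * ((q + 2) * (q + 3))) := by ring
      rw [R, L]
      have hratio : (2 * T + 1 - m) * ((q + 2) * (q + 3))
          ≤ (n - (q + 1)) * (n - (q + 2)) * (m + 1) := by
        rcases Nat.even_or_odd q with ⟨w, hw⟩ | ⟨w, hw⟩
        · obtain ⟨u, hu⟩ : ∃ u, T = w + 1 + u := ⟨T - w - 1, by omega⟩
          have e0 : m = w := by omega
          have e1 : 2 * T + 1 - m = w + 2 * u + 3 := by omega
          have e2 : n - (q + 1) = 2 * w + 4 * u + 6 := by omega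
          have e3 : n - (q + 2) = 2 * w + 4 * u + 5 := by omega
          have e4 : q + 2 = 2 * w + 2 := by omega
          have e5 : q + 3 = 2 * w + 3 := by omega
          rw [e1, e2, e3, e4, e5, e0]
          rw [show (w + 2 * u + 3) * ((2 * w + 2) * (2 * w + 3))
                = (w + 2 * u + 3) * ((2 * w + 2) * (2 * w + 3)) from rfl,
            show (2 * w + 4 * u + 6) * (2 * w + 4 * u + 5) * (w + 1)
                = (w + 2 * u + 3) * ((2 * w + 2) * (2 * w + 4 * u + 5)) from by ring]
          exact Nat.mul_le_mul_left _ (Nat.mul_le_mul_left _ (by omega))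
        · obtain ⟨u, hu⟩ : ∃ u, T = w + 2 + u := ⟨T - w - 2, by omega⟩
          have e0 : m = w + 1 := by omega
          have e1 : 2 * T + 1 - m = w + 2 * u + 4 := by omega
          have e2 : n - (q + 1) = 2 * w + 4 * u + 9 := by omega
          have e3 : n - (q + 2) = 2 * w + 4 * u + 8 := by omega
          have e4 : q + 2 = 2 * w + 3 := by omega
          have e5 : q + 3 = 2 * w + 4 := by omega
          rw [e1, e2, e3, e4, e5, e0]
          rw [show (w + 2 * u + 4) * ((2 * w + 3) * (2 * w + 4))
                = (w + 2 * u + 4) * ((2 * w + 4) * (2 * w + 3)) from by ring,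
            show (2 * w + 4 * u + 9) * (2 * w + 4 * u + 8) * (w + 1 + 1)
                = (w + 2 * u + 4) * ((2 * w + 4) * (2 * w + 4 * u + 9)) from by ring]
          exact Nat.mul_le_mul_left _ (Nat.mul_le_mul_left _ (by omega))
      calc n * Nat.choose (2 * T + 1) m * ((2 * T + 1 - m) * ((q + 2) * (q + 3)))
          = (n * Nat.choose (2 * T + 1) m) * ((2 * T + 1 - m) * ((q + 2) * (q + 3))) := by ring
        _ ≤ Nat.choose n (q + 1) * ((n - (q + 1)) * (n - (q + 2)) * (m + 1)) :=
            Nat.mul_le_mul ih hratio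
        _ = Nat.choose n (q + 1) * (n - (q + 1)) * (n - (q + 2)) * (m + 1) := by ring

lemma choose_ineq (t r : ℕ) (ht : 1 ≤ t) (h1 : 1 ≤ r) (h2 : r ≤ 4 * t - 2) :
    (4 * t - 1) * Nat.choose (2 * t - 1) (r / 2) ≤ Nat.choose (4 * t - 1) r := by
  obtain ⟨T, rfl⟩ : ∃ T, t = T + 1 := ⟨t - 1, by omega⟩
  have e1 : 4 * (T + 1) - 1 = 4 * T + 3 := by omega
  have e2 : 2 * (T + 1) - 1 = 2 * T + 1 := by omega
  rw [e1, e2]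
  rcases le_or_gt r (2 * T + 1) with h | h
  · exact choose_ineq_core T r h1 h
  · have hsym : Nat.choose (4 * T + 3) r = Nat.choose (4 * T + 3) (4 * T + 3 - r) := by
      rw [show (4 * T + 3 - r) = 4 * T + 3 - r from rfl]
      exact (Nat.choose_symm (by omega)).symm
    have hhalf : r / 2 = 2 * T + 1 - (4 * T + 3 - r) / 2 := by omega
    have hsym2 : Nat.choose (2 * T + 1) (r / 2)
        = Nat.choose (2 * T + 1) ((4 * T + 3 - r) / 2) := by
      rw [hhalf]
      exact Nat.choose_symm (by omega)
    rw [hsym, hsym2]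
    exact choose_ineq_core T (4 * T + 3 - r) (by omega) (by omega)

/-- The minimum of `K_{2t}^{4t-1}(r)` over `0 ≤ r ≤ 4t-1` is
`ρ(1) = -C(4t-1,2t)/(4t-1)`. -/
theorem binKraw_4t_sub_one_min (t : ℕ) (ht : 1 ≤ t) :
    (∀ r : ℕ, r ≤ 4 * t - 1 →
      ((binKraw (4 * t - 1) (2 * t) r : ℤ) : ℚ)
        ≥ -((4 * t - 1).choose (2 * t) : ℚ) / (4 * t - 1)) ∧
    ((binKraw (4 * t - 1) (2 * t) 1 : ℤ) : ℚ)
        = -((4 * t - 1).choose (2 * t) : ℚ) / (4 * t - 1) := by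
  have hn2t : 2 * t ≤ 4 * t - 1 := by omega
  have hnq : (0 : ℚ) < 4 * (t : ℚ) - 1 := by
    have : (1 : ℚ) ≤ (t : ℚ) := by exact_mod_cast ht
    linarith
  have hcast : ((4 * t - 1 : ℕ) : ℚ) = 4 * (t : ℚ) - 1 := by
    rw [Nat.cast_sub (by omega)]
    push_cast
    ring
  have hA : (0 : ℚ) ≤ ((4 * t - 1).choose (2 * t) : ℚ) := by positivity
  constructor
  · intro r hr
    have hd := binKraw_dual (4 * t - 1) (2 * t) r hr hn2t
    rw [binKraw_eval t r ht] at hd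
    have hdq := congrArg (Int.cast : ℤ → ℚ) hd
    push_cast at hdq
    have hB : (0 : ℚ) < ((4 * t - 1).choose r : ℚ) := by
      exact_mod_cast Nat.choose_pos hr
    have hD : (0 : ℚ) ≤ ((2 * t - 1).choose (r / 2) : ℚ) := by positivity
    rw [ge_iff_le, div_le_iff₀ hnq, ← mul_le_mul_iff_right₀ hB]
    have hre : ((4 * t - 1).choose r : ℚ) *
        (((binKraw (4 * t - 1) (2 * t) r : ℤ) : ℚ) * (4 * (t : ℚ) - 1))
        = ((4 * t - 1).choose (2 * t) : ℚ) *
          ((-1) ^ ((r + 1) / 2) * ((2 * t - 1).choose (r / 2) : ℚ)) * (4 * (t : ℚ) - 1) := by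
      rw [← mul_assoc, hdq]
    rw [hre]
    rcases Nat.even_or_odd ((r + 1) / 2) with he | he
    · rw [he.neg_one_pow]
      have h1 : (0 : ℚ) ≤ ((4 * t - 1).choose (2 * t) : ℚ)
          * (1 * ((2 * t - 1).choose (r / 2) : ℚ)) * (4 * (t : ℚ) - 1) := by
        rw [one_mul]
        positivity
      nlinarith [mul_nonneg hB.le hA]
    · rw [he.neg_one_pow]
      obtain ⟨c, hc⟩ := he
      have hr1 : 1 ≤ r := by omega
      have hr2 : r ≤ 4 * t - 2 := by omega
      have hL4 := choose_ineq t r ht hr1 hr2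
      have hL4q : ((4 * t - 1 : ℕ) : ℚ) * ((2 * t - 1).choose (r / 2) : ℚ)
          ≤ ((4 * t - 1).choose r : ℚ) := by exact_mod_cast hL4
      rw [hcast] at hL4q
      nlinarith [mul_le_mul_of_nonneg_left hL4q hA]
  · have hd := binKraw_dual (4 * t - 1) (2 * t) 1 (by omega) hn2t
    rw [binKraw_eval t 1 ht] at hd
    norm_num [Nat.choose_one_right] at hd
    have hdq := congrArg (Int.cast : ℤ → ℚ) hd
    push_cast at hdq
    rw [hcast] at hdq
    rw [eq_div_iff (by linarith : (4 * (t : ℚ) - 1) ≠ 0)]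
    linarith [hdq]
end

section
/- For t ≥ 1, the minimum of K_{2t+2}^{4t+2}(r) over 0 ≤ r ≤ 4t+2 equals -C(4t+2, 2t+2)/(2t+1). -/
lemma choose_right_int (n k : ℕ) :
    ((k : ℤ) + 1) * ((n.choose (k+1) : ℕ) : ℤ) = ((n : ℤ) - k) * (n.choose k) := by
  rcases le_or_gt k n with h | h
  · have h1 := Nat.choose_succ_right_eq n k
    have h2 : ((n - k : ℕ) : ℤ) = (n : ℤ) - k := by
      push_cast [h]; ring
    have := congrArg (fun z : ℕ => (z : ℤ)) h1
    push_cast at this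
    rw [← h2]
    push_cast
    linarith
  · rw [Nat.choose_eq_zero_of_lt h, Nat.choose_eq_zero_of_lt (by omega)]
    simp

lemma choose_up_int (n k : ℕ) :
    ((n : ℤ) + 1) * (n.choose k) = ((n : ℤ) + 1 - k) * ((n+1).choose k) := by
  have h1 := Nat.add_one_mul_choose_eq n k
  have h2 := choose_right_int (n+1) k
  have h1' := congrArg (fun z : ℕ => (z : ℤ)) h1
  push_cast at h1' h2 ⊢
  linarith

lemma pascal_int (n k : ℕ) :
    (((n+2).choose (k+1) : ℕ) : ℤ) = ((n+1).choose k : ℤ) + ((n+1).choose (k+1) : ℤ) := by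
  rw [show n+2 = (n+1)+1 from rfl, Nat.choose_succ_succ]
  push_cast
  ring

section pointwise
variable (r m : ℕ)

-- j = 0 case, ℓ = s+1
lemma pt0 (s : ℕ) :
    ((r:ℤ)+1) * ((m+2).choose (s+1)) + ((m:ℤ)+1) * (m.choose (s+1))
      - ((r:ℤ) + m + 2 - 2*((s:ℤ)+1)) * ((m+1).choose (s+1))
    = ((r:ℤ) + m + 3 - ((s:ℤ)+1)) * ((m+1).choose s) := by
  have h2 := choose_up_int m (s+1)
  have h4 := choose_right_int (m+1) s
  have h5 := pascal_int m s
  push_cast at h2 h4 h5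
  linear_combination ((r:ℤ)+1) * h5 + h2 + h4

-- middle case, j = i+1, ℓ = i+s+2
lemma ptMid (i s : ℕ) :
    ((r:ℤ)+1) * (r.choose (i+1)) * ((m+2).choose (s+1))
      + ((m:ℤ)+1) * ((r+2).choose (i+1)) * (m.choose (s+1))
      - ((r:ℤ) + m + 2 - 2*((i:ℤ)+(s:ℤ)+2)) * ((r+1).choose (i+1)) * ((m+1).choose (s+1))
    = ((r:ℤ) + m + 3 - ((i:ℤ)+(s:ℤ)+2)) *
        (((r+1).choose (i+1)) * ((m+1).choose s) + ((r+1).choose i) * ((m+1).choose (s+1))) := by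
  have h1 := choose_up_int r (i+1)
  have h2 := choose_up_int m (s+1)
  have h3 := choose_right_int (r+1) i
  have h4 := choose_right_int (m+1) s
  have h5 := pascal_int m s
  have h6 := pascal_int r i
  push_cast at h1 h2 h3 h4 h5 h6
  linear_combination (((m+2).choose (s+1) : ℤ)) * h1 + (((r+2).choose (i+1) : ℤ)) * h2
    + (((m+1).choose (s+1) : ℤ)) * h3 + (((r+1).choose (i+1) : ℤ)) * h4
    + ((r:ℤ) - i) * ((r+1).choose (i+1)) * h5 + ((m:ℤ) - s) * ((m+1).choose (s+1)) * h6

-- last case, j = ℓ = i+1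
lemma ptEnd (i : ℕ) :
    ((r:ℤ)+1) * (r.choose (i+1)) + ((m:ℤ)+1) * ((r+2).choose (i+1))
      - ((r:ℤ) + m + 2 - 2*((i:ℤ)+1)) * ((r+1).choose (i+1))
    = ((r:ℤ) + m + 3 - ((i:ℤ)+1)) * ((r+1).choose i) := by
  have h1 := choose_up_int r (i+1)
  have h3 := choose_right_int (r+1) i
  have h6 := pascal_int r i
  push_cast at h1 h3 h6
  linear_combination h1 + ((m:ℤ)+1) * h6 + h3

end pointwise

lemma eigen (r m ℓ : ℕ) (hℓ : 1 ≤ ℓ) :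
    ((r:ℤ)+1) * binKraw (r+m+2) ℓ r + ((m:ℤ)+1) * binKraw (r+m+2) ℓ (r+2)
      = ((r:ℤ) + (m:ℤ) + 2 - 2*(ℓ:ℤ)) * binKraw (r+m+2) ℓ (r+1) := by
  set F : ℕ → ℤ := fun j =>
    ((r:ℤ)+1) * ((-1:ℤ)^j * (r.choose j) * ((m+2).choose (ℓ-j)))
    + ((m:ℤ)+1) * ((-1:ℤ)^j * ((r+2).choose j) * (m.choose (ℓ-j)))
    - ((r:ℤ) + (m:ℤ) + 2 - 2*(ℓ:ℤ)) * ((-1:ℤ)^j * ((r+1).choose j) * ((m+1).choose (ℓ-j))) with hF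
  set g : ℕ → ℤ := fun j =>
    if j = 0 then 0 else
      -((r:ℤ) + (m:ℤ) + 3 - (ℓ:ℤ)) * (-1:ℤ)^j * ((r+1).choose (j-1)) * ((m+1).choose (ℓ-j)) with hg
  have tel : ∀ j ∈ Finset.range ℓ, F j = g (j+1) - g j := by
    intro j hj
    have hjl : j < ℓ := Finset.mem_range.mp hj
    match j with
    | 0 =>
      obtain ⟨s, hs⟩ : ∃ s, ℓ = s + 1 := ⟨ℓ - 1, by omega⟩
      subst hs
      simp only [hF, hg, hg]
      have e1 : s + 1 - 1 = s := by omega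
      simp only [if_pos rfl, if_neg (Nat.one_ne_zero), e1, Nat.sub_self,
        Nat.choose_zero_right, pow_zero, pow_one]
      have := pt0 r m s
      push_cast at this ⊢
      linear_combination this
    | (i+1) =>
      obtain ⟨s, hs⟩ : ∃ s, ℓ = i + 2 + s := ⟨ℓ - (i+2), by omega⟩
      subst hs
      simp only [hF, hg]
      have e1 : i + 2 + s - (i+1) = s + 1 := by omega
      have e2 : i + 2 + s - (i+2) = s := by omega
      have e3 : i + 1 - 1 = i := by omega
      have e4 : i + 2 - 1 = i + 1 := by omega
      simp only [if_neg (Nat.succ_ne_zero i), if_neg (Nat.succ_ne_zero (i+1)), e1, e2, e3, e4]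
      have := ptMid r m i s
      have hsgn : ((-1:ℤ))^(i+1+1) = -(-1:ℤ)^(i+1) := by rw [pow_succ]; ring
      push_cast at this ⊢
      linear_combination ((-1:ℤ)^(i+1)) * this
  have telsum : ∑ j ∈ Finset.range ℓ, (fun j => g (j+1) - g j) j = g ℓ - g 0 :=
    Finset.sum_range_sub g ℓ
  have hsum : ∑ j ∈ Finset.range (ℓ+1), F j = 0 := by
    rw [Finset.sum_range_succ, Finset.sum_congr rfl tel, telsum]
    obtain ⟨i, hi⟩ : ∃ i, ℓ = i + 1 := ⟨ℓ - 1, by omega⟩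
    subst hi
    simp only [hF, hg, if_neg (Nat.succ_ne_zero i), if_pos rfl, Nat.sub_self,
      Nat.choose_zero_right, Nat.add_sub_cancel]
    have := ptEnd r m i
    push_cast at this ⊢
    linear_combination ((-1:ℤ)^(i+1)) * this
  have e1 : r + m + 2 - r = m + 2 := by omega
  have e2 : r + m + 2 - (r+2) = m := by omega
  have e3 : r + m + 2 - (r+1) = m + 1 := by omega
  have expand : ((r:ℤ)+1) * binKraw (r+m+2) ℓ r + ((m:ℤ)+1) * binKraw (r+m+2) ℓ (r+2)
      - ((r:ℤ) + (m:ℤ) + 2 - 2*(ℓ:ℤ)) * binKraw (r+m+2) ℓ (r+1)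
      = ∑ j ∈ Finset.range (ℓ+1), F j := by
    unfold binKraw
    rw [e1, e2, e3, Finset.mul_sum, Finset.mul_sum, Finset.mul_sum,
      ← Finset.sum_add_distrib, ← Finset.sum_sub_distrib]
  rw [hsum] at expand
  linarith [expand]

lemma binKraw_zero (n ℓ : ℕ) : binKraw n ℓ 0 = (n.choose ℓ : ℤ) := by
  unfold binKraw
  rw [Finset.sum_eq_single 0]
  · simp
  · intro j hj hj0
    rw [Nat.choose_eq_zero_of_lt (by omega : 0 < j)]
    simp
  · intro h
    exact absurd (Finset.mem_range.mpr (by omega)) h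

lemma binKraw_one (n ℓ : ℕ) :
    binKraw (n+1) (ℓ+1) 1 = (n.choose (ℓ+1) : ℤ) - (n.choose ℓ : ℤ) := by
  unfold binKraw
  rw [show n + 1 - 1 = n from rfl]
  rw [Finset.sum_range_succ', Finset.sum_range_succ']
  have hz : ∀ j ∈ Finset.range ℓ, (-1:ℤ)^(j+1+1) * ((Nat.choose 1 (j+1+1) : ℕ) : ℤ)
      * ((n.choose (ℓ+1-(j+1+1)) : ℕ) : ℤ) = 0 := by
    intro j hj
    rw [Nat.choose_eq_zero_of_lt (by omega : 1 < j+1+1)]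
    simp
  rw [Finset.sum_congr rfl hz, Finset.sum_const_zero]
  simp [Nat.add_sub_cancel]
  ring

lemma binKraw_symm (n ℓ r : ℕ) (h : r ≤ n) :
    binKraw n ℓ (n - r) = (-1:ℤ)^ℓ * binKraw n ℓ r := by
  unfold binKraw
  rw [Nat.sub_sub_self h, Finset.mul_sum]
  rw [← Finset.sum_range_reflect (fun j => (-1:ℤ)^ℓ * ((-1:ℤ)^j * (r.choose j) * ((n-r).choose (ℓ-j)))) (ℓ+1)]
  apply Finset.sum_congr rfl
  intro j hj
  have hjl : j ≤ ℓ := by have := Finset.mem_range.mp hj; omega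
  have e1 : ℓ + 1 - 1 - j = ℓ - j := by omega
  have e2 : ℓ - (ℓ - j) = j := by omega
  rw [e1, e2]
  have hsgn : (-1:ℤ)^ℓ * (-1:ℤ)^(ℓ-j) = (-1:ℤ)^j := by
    rw [← pow_add, show ℓ + (ℓ - j) = j + 2*(ℓ-j) from by omega, pow_add, pow_mul]
    simp
  linear_combination (-(((n-r).choose j : ℕ) : ℤ) * ((r.choose (ℓ-j) : ℕ) : ℤ)) * hsgn

def ckc (t : ℕ) : ℕ → ℚ
  | 0 => ((4*t+2).choose (2*t+2) : ℚ) / (2*(t:ℚ)+1)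
  | (k+1) => ckc t k * (2*(k:ℚ)+1) / (4*(t:ℚ)+1-2*(k:ℚ))

lemma key (t : ℕ) (ht : 1 ≤ t) (k : ℕ) (hk : k ≤ t) :
    0 < ckc t k ∧
    ((binKraw (4*t+2) (2*t+2) (2*k) : ℤ) : ℚ)
      = (-1:ℚ)^k * (2*(t:ℚ)+1-2*(k:ℚ)) * ckc t k ∧
    ((binKraw (4*t+2) (2*t+2) (2*k+1) : ℤ) : ℚ)
      = (-1:ℚ)^(k+1) * (2*(k:ℚ)+1) * ckc t k ∧
    (2*(k:ℚ)+1) * ckc t k ≤ ckc t 0 ∧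
    (1 ≤ k → (4*(t:ℚ)+1) * ckc t k ≤ ckc t 0) := by
  have hc0eq : ckc t 0 = ((4*t+2).choose (2*t+2) : ℚ) / (2*(t:ℚ)+1) := rfl
  have htQ : (1:ℚ) ≤ (t:ℚ) := by exact_mod_cast ht
  have hc0 : 0 < ckc t 0 := by
    rw [hc0eq]
    apply div_pos
    · exact_mod_cast Nat.choose_pos (by omega : 2*t+2 ≤ 4*t+2)
    · linarith
  induction k with
  | zero =>
    refine ⟨hc0, ?_, ?_, by norm_num, by omega⟩
    · rw [show 2*0 = 0 from rfl, binKraw_zero]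
      rw [hc0eq]
      push_cast
      field_simp
      ring
    · rw [show 2*0+1 = 1 from rfl]
      rw [show 4*t+2 = (4*t+1)+1 from by omega, show 2*t+2 = (2*t+1)+1 from by omega,
        binKraw_one, show 2*t+1+1 = 2*t+2 from by omega]
      have hA := Nat.choose_succ_right_eq (4*t+1) (2*t+1)
      rw [show 4*t+1-(2*t+1) = 2*t from by omega, show 2*t+1+1 = 2*t+2 from by omega] at hA
      have hAQ := congrArg (fun z : ℕ => (z:ℚ)) hA
      have hP := Nat.choose_succ_succ (4*t+1) (2*t+1)
      have hPQ := congrArg (fun z : ℕ => (z:ℚ)) hP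
      simp only [Nat.succ_eq_add_one] at hPQ
      rw [show (4*t+1)+1 = 4*t+2 from by omega, show (2*t+1)+1 = 2*t+2 from by omega] at hPQ
      push_cast at hAQ hPQ ⊢
      rw [hc0eq]
      have hne : (2*(t:ℚ)+1) ≠ 0 := by linarith
      field_simp
      linear_combination hAQ + hPQ
  | succ k ih =>
    obtain ⟨hc, h0, h1, hb1, hb2⟩ := ih (by omega)
    have hkQ : ((k:ℚ))+1 ≤ (t:ℚ) := by exact_mod_cast hk
    have hden : (0:ℚ) < 4*(t:ℚ)+1-2*(k:ℚ) := by linarith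
    have hck1 : ckc t (k+1) = ckc t k * (2*(k:ℚ)+1) / (4*(t:ℚ)+1-2*(k:ℚ)) := rfl
    have hck1' : (4*(t:ℚ)+1-2*(k:ℚ)) * ckc t (k+1) = (2*(k:ℚ)+1) * ckc t k := by
      rw [hck1]; field_simp
    have hc1 : 0 < ckc t (k+1) := by
      rw [hck1]
      apply div_pos (by positivity) hden
    -- first eigen application : r = 2k, m = 4t-2k
    have hn1 : 2*k + (4*t-2*k) + 2 = 4*t+2 := by omega
    have E1 := eigen (2*k) (4*t-2*k) (2*t+2) (by omega)
    rw [hn1] at E1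
    have hm1 : ((4*t-2*k : ℕ) : ℤ) = 4*(t:ℤ)-2*(k:ℤ) := by omega
    rw [hm1] at E1
    have E1Q := congrArg (fun z : ℤ => (z:ℚ)) E1
    push_cast at E1Q
    rw [h0, h1] at E1Q
    have hK2 : ((binKraw (4*t+2) (2*t+2) (2*k+2) : ℤ) : ℚ)
        = (-1:ℚ)^(k+1) * (2*(t:ℚ)+1-2*((k:ℚ)+1)) * ckc t (k+1) := by
      apply mul_left_cancel₀ (ne_of_gt hden)
      linear_combination E1Q + (-1:ℚ)^k * (2*(t:ℚ)-1-2*(k:ℚ)) * hck1'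
    -- second eigen application : r = 2k+1, m = 4t-2k-1
    have hn2 : (2*k+1) + (4*t-2*k-1) + 2 = 4*t+2 := by omega
    have E2 := eigen (2*k+1) (4*t-2*k-1) (2*t+2) (by omega)
    rw [hn2] at E2
    have hm2 : ((4*t-2*k-1 : ℕ) : ℤ) = 4*(t:ℤ)-2*(k:ℤ)-1 := by omega
    rw [hm2] at E2
    rw [show 2*k+1+2 = 2*k+3 from by omega, show 2*k+1+1 = 2*k+2 from by omega] at E2
    have E2Q := congrArg (fun z : ℤ => (z:ℚ)) E2
    push_cast at E2Q
    rw [h1, hK2] at E2Q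
    have hden2 : (0:ℚ) < 4*(t:ℚ)-2*(k:ℚ) := by linarith
    have hK3 : ((binKraw (4*t+2) (2*t+2) (2*k+3) : ℤ) : ℚ)
        = (-1:ℚ)^(k+2) * (2*((k:ℚ)+1)+1) * ckc t (k+1) := by
      apply mul_left_cancel₀ (ne_of_gt hden2)
      linear_combination E2Q - (-1:ℚ)^k * (2*(k:ℚ)+2) * hck1'
    refine ⟨hc1, ?_, ?_, ?_, ?_⟩
    · rw [show 2*(k+1) = 2*k+2 from by omega]
      rw [hK2]
      push_cast
      ring
    · rw [show 2*(k+1)+1 = 2*k+3 from by omega]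
      rw [hK3]
      push_cast
      ring
    · push_cast
      rw [hck1]
      rw [show (2*((k:ℚ)+1)+1) * (ckc t k * (2*(k:ℚ)+1) / (4*(t:ℚ)+1-2*(k:ℚ)))
          = ((2*((k:ℚ)+1)+1) * (ckc t k * (2*(k:ℚ)+1))) / (4*(t:ℚ)+1-2*(k:ℚ)) from by ring]
      rw [div_le_iff₀ hden]
      have t1 : (2*((k:ℚ)+1)+1) * ((2*(k:ℚ)+1) * ckc t k) ≤ (2*((k:ℚ)+1)+1) * ckc t 0 :=
        mul_le_mul_of_nonneg_left hb1 (by positivity)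
      have t2 : (2*((k:ℚ)+1)+1) * ckc t 0 ≤ (4*(t:ℚ)+1-2*(k:ℚ)) * ckc t 0 :=
        mul_le_mul_of_nonneg_right (by linarith) (le_of_lt hc0)
      nlinarith [t1, t2]
    · intro _
      rcases Nat.eq_zero_or_pos k with hk0 | hk1
      · subst hk0
        rw [hck1]
        push_cast
        have h4 : (4*(t:ℚ)+1) ≠ 0 := by linarith
        have heq : (4*(t:ℚ)+1) * (ckc t 0 * (2*(0:ℚ)+1) / (4*(t:ℚ)+1-2*(0:ℚ))) = ckc t 0 := by
          field_simp
          norm_num [h4]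
        rw [show (2*(0:ℚ)+1) = 2*(0:ℚ)+1 from rfl]
        calc (4*(t:ℚ)+1) * (ckc t 0 * (2*(0:ℚ)+1) / (4*(t:ℚ)+1-2*(0:ℚ))) = ckc t 0 := heq
          _ ≤ ckc t 0 := le_refl _
      · have hb2' := hb2 hk1
        have hle : ckc t (k+1) ≤ ckc t k := by
          rw [hck1, div_le_iff₀ hden]
          exact mul_le_mul_of_nonneg_left (by linarith : (2*(k:ℚ)+1) ≤ 4*(t:ℚ)+1-2*(k:ℚ))
            (le_of_lt hc)
        have hstep : (4*(t:ℚ)+1) * ckc t (k+1) ≤ (4*(t:ℚ)+1) * ckc t k :=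
          mul_le_mul_of_nonneg_left hle (by linarith)
        linarith [hb2']

/-- The minimum of `K_{2t+2}^{4t+2}(r)` over `0 ≤ r ≤ 4t+2` equals
`-C(4t+2,2t+2)/(2t+1)`. -/
theorem binKraw_4t_add_two_min (t : ℕ) (ht : 1 ≤ t) :
    (∀ r : ℕ, r ≤ 4 * t + 2 →
      ((binKraw (4 * t + 2) (2 * t + 2) r : ℤ) : ℚ)
        ≥ -((4 * t + 2).choose (2 * t + 2) : ℚ) / (2 * t + 1)) ∧
    (∃ r : ℕ, r ≤ 4 * t + 2 ∧
      ((binKraw (4 * t + 2) (2 * t + 2) r : ℤ) : ℚ)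
        = -((4 * t + 2).choose (2 * t + 2) : ℚ) / (2 * t + 1)) := by
  have hc0eq : ckc t 0 = ((4*t+2).choose (2*t+2) : ℚ) / (2*(t:ℚ)+1) := rfl
  have hc0 : 0 < ckc t 0 := (key t ht 0 (by omega)).1
  have hRHS : -((4 * t + 2).choose (2 * t + 2) : ℚ) / (2 * (t:ℚ) + 1) = -(ckc t 0) := by
    rw [hc0eq]; ring
  have half : ∀ r : ℕ, r ≤ 2*t+1 →
      ((binKraw (4*t+2) (2*t+2) r : ℤ) : ℚ) ≥ -(ckc t 0) := by
    intro r hr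
    rcases Nat.even_or_odd r with ⟨k, hk⟩ | ⟨k, hk⟩
    · have hk2 : r = 2*k := by omega
      have hkt : k ≤ t := by omega
      obtain ⟨hc, h0, h1, hb1, hb2⟩ := key t ht k hkt
      rw [hk2, h0]
      have hkQ : (k:ℚ) ≤ (t:ℚ) := by exact_mod_cast hkt
      have hkQ0 : (0:ℚ) ≤ (k:ℚ) := by positivity
      have hcoef : (0:ℚ) ≤ 2*(t:ℚ)+1-2*(k:ℚ) := by linarith
      rcases Nat.eq_zero_or_pos k with h | h
      · subst h
        simp only [pow_zero, one_mul]
        nlinarith [hc0, hc]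
      · have hb2' := hb2 h
        have habs : (2*(t:ℚ)+1-2*(k:ℚ)) * ckc t k ≤ ckc t 0 := by
          nlinarith [hc, hb2', hkQ0]
        rcases Nat.even_or_odd k with he | ho
        · rw [he.neg_one_pow, one_mul]
          nlinarith [hc, hcoef, hc0]
        · rw [ho.neg_one_pow]
          nlinarith [habs]
    · have hkt : k ≤ t := by omega
      obtain ⟨hc, h0, h1, hb1, hb2⟩ := key t ht k hkt
      rw [hk, h1]
      have hkQ0 : (0:ℚ) ≤ (k:ℚ) := by positivity
      rcases Nat.even_or_odd (k+1) with he | ho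
      · rw [he.neg_one_pow, one_mul]
        nlinarith [hc, hc0, hkQ0]
      · rw [ho.neg_one_pow]
        nlinarith [hb1]
  constructor
  · intro r hr
    rcases le_or_gt r (2*t+1) with h | h
    · rw [ge_iff_le, hRHS]
      exact half r h
    · have hr' : 4*t+2-r ≤ 2*t+1 := by omega
      have hsym := binKraw_symm (4*t+2) (2*t+2) (4*t+2-r) (by omega)
      rw [Nat.sub_sub_self hr] at hsym
      have hev : (-1:ℤ)^(2*t+2) = 1 := by
        rw [show 2*t+2 = 2*(t+1) from by ring, pow_mul]
        norm_num
      rw [hev, one_mul] at hsym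
      rw [ge_iff_le, hRHS, hsym]
      exact half _ hr'
  · refine ⟨1, by omega, ?_⟩
    have h1 := (key t ht 0 (by omega)).2.2.1
    rw [show 2*0+1 = 1 from rfl] at h1
    rw [h1, hRHS]
    push_cast
    ring
end

section
/- Let x, y ∈ F_2^n with Hamming distance d(x,y) = ℓ where ℓ ≥ n/2, set d = 2ℓ, extend x and y to F_2^d by appending zeros, and define d×d matrices P_x^α(i,j) = (1/d) ξ_d^{(i-j)α} (-1)^{x_i+x_j}, ξ_d = e^{2πi/d}, for 0 ≤ α ≤ d-1. Then Σ_{k=0}^{d-1} (-1)^{x_k+y_k} = 0 and consequently P_x^α P_y^α = 0 for every α. -/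
open Complex

/-- Hamming distance between binary vectors. -/
def hdist {n : ℕ} (x y : Fin n → ZMod 2) : ℕ :=
  (Finset.univ.filter (fun i => x i ≠ y i)).card

/-- Extension of a vector of `F_2^n` to `F_2^d` by appending zeros. -/
def extZero {n d : ℕ} (hnd : n ≤ d) (x : Fin n → ZMod 2) : Fin d → ZMod 2 :=
  fun i => if h : (i : ℕ) < n then x ⟨i, h⟩ else 0

/-- The `d×d` matrices `P_x^α(i,j) = (1/d) ξ_d^{(i-j)α} (-1)^{x_i+x_j}`,
where `ξ_d = e^{2πi/d}`. -/
noncomputable def projMat (d : ℕ) (x : Fin d → ZMod 2) (α : ℕ) :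
    Matrix (Fin d) (Fin d) ℂ :=
  Matrix.of fun i j =>
    (1 / d : ℂ) * Complex.exp (2 * Real.pi * Complex.I / d) ^ (((i : ℤ) - (j : ℤ)) * α)
      * (-1 : ℂ) ^ ((x i).val + (x j).val)

lemma neg_one_pow_of_ne (a b : ZMod 2) (h : a ≠ b) : (-1 : ℤ) ^ (a.val + b.val) = -1 := by
  revert h; revert a b; decide

lemma neg_one_pow_of_eq (a b : ZMod 2) (h : a = b) : (-1 : ℤ) ^ (a.val + b.val) = 1 := by
  subst h; revert a; decide

/-- If `d(x,y) = ℓ` with `ℓ ≥ n/2` and `d = 2ℓ`, then after extending `x, y`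
by zeros, `∑_{k=0}^{d-1} (-1)^{x_k+y_k} = 0` and `P_x^α P_y^α = 0` for every
`0 ≤ α ≤ d-1`: the quantum chromatic number of `H_{n,ℓ}` is at most `2ℓ`. -/
theorem projMat_orthogonal_of_hamming_adjacent (n ℓ : ℕ) (hℓ : n ≤ 2 * ℓ)
    (x y : Fin n → ZMod 2) (hxy : hdist x y = ℓ) (hnd : n ≤ 2 * ℓ) :
    (∑ k : Fin (2 * ℓ), (-1 : ℤ) ^ ((extZero hnd x k).val + (extZero hnd y k).val) = 0) ∧
    (∀ α : ℕ, α ≤ 2 * ℓ - 1 →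
      projMat (2 * ℓ) (extZero hnd x) α * projMat (2 * ℓ) (extZero hnd y) α = 0) := by
  set X := extZero hnd x with hX
  set Y := extZero hnd y with hY
  have hcard : (Finset.univ.filter (fun k : Fin (2*ℓ) => X k ≠ Y k)).card = ℓ := by
    have himg : (Finset.univ.filter (fun k : Fin (2*ℓ) => X k ≠ Y k))
        = (Finset.univ.filter (fun i : Fin n => x i ≠ y i)).image (Fin.castLE hnd) := by
      ext k
      simp only [Finset.mem_filter, Finset.mem_image, Finset.mem_univ, true_and]
      constructor
      · intro hk
        have hkn : (k : ℕ) < n := by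
          by_contra h
          apply hk
          simp only [hX, hY, extZero, dif_neg h]
        refine ⟨⟨k, hkn⟩, ?_, ?_⟩
        · intro he
          apply hk
          simp only [hX, hY, extZero, dif_pos hkn]
          exact he
        · ext; rfl
      · rintro ⟨j, hj, rfl⟩
        have hjn : ((Fin.castLE hnd j : Fin (2*ℓ)) : ℕ) < n := j.isLt
        simp only [hX, hY, extZero, dif_pos hjn]
        exact hj
    rw [himg, Finset.card_image_of_injective _ (Fin.castLE_injective hnd)]
    exact hxy
  have key : ∑ k : Fin (2 * ℓ), (-1 : ℤ) ^ ((X k).val + (Y k).val) = 0 := by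
    rw [← Finset.sum_filter_add_sum_filter_not Finset.univ (fun k => X k ≠ Y k)]
    have h1 : ∑ k ∈ Finset.univ.filter (fun k : Fin (2*ℓ) => X k ≠ Y k),
        (-1 : ℤ) ^ ((X k).val + (Y k).val) = -(ℓ : ℤ) := by
      rw [Finset.sum_congr rfl (fun k hk => neg_one_pow_of_ne (X k) (Y k)
        (Finset.mem_filter.mp hk).2), Finset.sum_const, hcard]
      simp
    have hcard2 : (Finset.univ.filter (fun k : Fin (2*ℓ) => ¬ X k ≠ Y k)).card = ℓ := by
      have := Finset.card_filter_add_card_filter_not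
        (s := (Finset.univ : Finset (Fin (2*ℓ)))) (p := fun k => X k ≠ Y k)
      rw [hcard] at this
      simp only [Finset.card_univ, Fintype.card_fin] at this
      omega
    have h2 : ∑ k ∈ Finset.univ.filter (fun k : Fin (2*ℓ) => ¬ X k ≠ Y k),
        (-1 : ℤ) ^ ((X k).val + (Y k).val) = (ℓ : ℤ) := by
      rw [Finset.sum_congr rfl (fun k hk => neg_one_pow_of_eq (X k) (Y k)
        (not_not.mp (Finset.mem_filter.mp hk).2)), Finset.sum_const, hcard2]
      simp
    rw [h1, h2]; ring
  refine ⟨key, fun α hα => ?_⟩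
  ext i j
  set ξ : ℂ := Complex.exp (2 * Real.pi * Complex.I / (2*ℓ : ℕ)) with hξdef
  have hξ : ξ ≠ 0 := Complex.exp_ne_zero _
  simp only [Matrix.mul_apply, projMat, Matrix.of_apply, Matrix.zero_apply]
  have hterm : ∀ k : Fin (2*ℓ),
      (1 / ((2*ℓ : ℕ) : ℂ)) * ξ ^ ((((i : ℤ)) - (k : ℤ)) * α) * (-1 : ℂ) ^ ((X i).val + (X k).val)
      * ((1 / ((2*ℓ : ℕ) : ℂ)) * ξ ^ ((((k : ℤ)) - (j : ℤ)) * α) * (-1 : ℂ) ^ ((Y k).val + (Y j).val))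
      = ((1 / ((2*ℓ : ℕ) : ℂ)) * (1 / ((2*ℓ : ℕ) : ℂ)) * ξ ^ ((((i : ℤ)) - (j : ℤ)) * α)
          * (-1 : ℂ) ^ (X i).val * (-1 : ℂ) ^ (Y j).val)
        * (-1 : ℂ) ^ ((X k).val + (Y k).val) := by
    intro k
    have he : (((i : ℤ)) - (k : ℤ)) * α + (((k : ℤ)) - (j : ℤ)) * α = (((i : ℤ)) - (j : ℤ)) * α := by
      ring
    rw [pow_add, pow_add, pow_add, ← he, zpow_add₀ hξ]
    ring
  rw [Finset.sum_congr rfl (fun k _ => hterm k), ← Finset.mul_sum]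
  have hz : (∑ k : Fin (2*ℓ), (-1 : ℂ) ^ ((X k).val + (Y k).val)) = 0 := by
    have h := congrArg (fun z : ℤ => (z : ℂ)) key
    push_cast at h
    exact h
  rw [hz, mul_zero]
end
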